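/- Let r ∈ ℝ and a ∈ S^r_{1,0}(ℝ^{2d}) be such that a − a_r ∈ S^{r−1}_{1,0}(ℝ^{2d}) for some a_r ∈ S^r_{1,0}(ℝ^{2d}) (a principal symbol). Let (x₀,ξ₀) ∈ ℝ^d × (ℝ^d∖{0}) and suppose there exist an open neighbourhood X of x₀, an open cone Γ containing ξ₀, a constant R > 0 and b ∈ S^{−r}_{1,0}(ℝ^{2d}) with a_r(x,ξ)b(x,ξ) = 1 whenever x ∈ X, ξ ∈ Γ and |ξ| > R. Then (x₀,ξ₀) ∉ Char_{(ω₀)}(a), where ω₀(x,ξ) = ⟨ξ⟩^r. -/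

import Mathlib

open MeasureTheory Filter Complex SchwartzMap Real
open scoped RealInnerProductSpace ENNReal NNReal Topology

noncomputable section

attribute [local instance 2000] Classical.propDecidable

/-- `ℝ^d`. -/
abbrev Ed (d : ℕ) : Type := EuclideanSpace ℝ (Fin d)

/-- Schwartz functions on `ℝ^d`. -/
abbrev SchD (d : ℕ) := SchwartzMap (Ed d) ℂ

/-- Tempered distributions on `ℝ^d`. -/
abbrev TDist (d : ℕ) := SchD d →L[ℂ] ℂ

/-- `ℝ^d × ℝ^d`, the phase space, used as the model for `ℝ^{2d}`. -/
abbrev Ed2 (d : ℕ) : Type := Ed d × Ed d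

/-- Schwartz functions on `ℝ^{2d}`. -/
abbrev SchD2 (d : ℕ) := SchwartzMap (Ed2 d) ℂ

/-- Tempered distributions on `ℝ^{2d}`. -/
abbrev TDist2 (d : ℕ) := SchD2 d →L[ℂ] ℂ

/-- The japanese bracket `⟨ξ⟩ = (1 + |ξ|²)^{1/2}`. -/
def jap {d : ℕ} (ξ : Ed d) : ℝ := Real.sqrt (1 + ‖ξ‖ ^ 2)

/-- The japanese bracket on `ℝ^{2d}`. -/
def jap2 {d : ℕ} (Y : Ed2 d) : ℝ := Real.sqrt (1 + ‖Y‖ ^ 2)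

/-- Pair a (distribution-like) functional `u` on Schwartz space with an explicitly given
function `g`, through the (unique) Schwartz representative of `g`, if it exists. -/
def distPairG {V : Type} [NormedAddCommGroup V] [NormedSpace ℝ V]
    (u : SchwartzMap V ℂ → ℂ) (g : V → ℂ) : ℂ :=
  if h : ∃ ψ : SchwartzMap V ℂ, ∀ x, ψ x = g x then u h.choose else 0

/-- The Schwartz representative of an explicitly given function, if it exists. -/
def schwartzOf {V : Type} [NormedAddCommGroup V] [NormedSpace ℝ V]
    (g : V → ℂ) : SchwartzMap V ℂ :=
  if h : ∃ ψ : SchwartzMap V ℂ, ∀ x, ψ x = g x then h.choose else 0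

/-- The constant `(2π)^{-d/2}` of the Fourier transform normalization. -/
def cD (d : ℕ) : ℝ := (2 * Real.pi) ^ (-(d : ℝ) / 2)

/-- Pointwise Fourier transform of the product `φ · u`, where `u` is a distribution-like
functional and `φ` a Schwartz cut-off:  `ℱ(φu)(ξ) = (2π)^{-d/2} u (φ e^{-i⟨·,ξ⟩})`. -/
def ftCut {d : ℕ} (u : SchD d → ℂ) (φ : SchD d) (ξ : Ed d) : ℂ :=
  (cD d : ℂ) * distPairG u fun x => φ x * Complex.exp (-(Complex.I * (⟪x, ξ⟫ : ℂ)))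

/-- Multiplication of a distribution-like functional by a (smooth) function:
`(g·u)(ψ) = u(g ψ)`. -/
def mulDist {V : Type} [NormedAddCommGroup V] [NormedSpace ℝ V]
    (u : SchwartzMap V ℂ → ℂ) (g : V → ℂ) : SchwartzMap V ℂ → ℂ :=
  fun ψ => distPairG u fun x => g x * ψ x

/-- The short-time Fourier transform of `u` with window `φw`:
`V_φ u(x,ξ) = (2π)^{-d/2} u (conj (φw (·-x)) e^{-i⟨·,ξ⟩})`. -/
def stft {d : ℕ} (u : SchD d → ℂ) (φw : SchD d) (x ξ : Ed d) : ℂ :=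
  (cD d : ℂ) * distPairG u fun y =>
    (starRingEnd ℂ) (φw (y - x)) * Complex.exp (-(Complex.I * (⟪y, ξ⟫ : ℂ)))

/-- The inner product on `ℝ^{2d} = ℝ^d × ℝ^d`. -/
def inner2 {d : ℕ} (X Y : Ed2 d) : ℝ := ⟪X.1, Y.1⟫ + ⟪X.2, Y.2⟫

/-- The short-time Fourier transform on `ℝ^{2d}`. -/
def stft2 {d : ℕ} (u : SchD2 d → ℂ) (φw : SchD2 d) (X Y : Ed2 d) : ℂ :=
  (cD (2 * d) : ℂ) * distPairG u fun Z =>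
    (starRingEnd ℂ) (φw (Z - X)) * Complex.exp (-(Complex.I * ((inner2 Z Y : ℝ) : ℂ)))

/-- Open cone in `ℝ^d ∖ {0}` with vertex at the origin. -/
def IsOpenConeNZ {d : ℕ} (Γ : Set (Ed d)) : Prop :=
  IsOpen Γ ∧ (0 : Ed d) ∉ Γ ∧ ∀ ξ ∈ Γ, ∀ t : ℝ, 0 < t → t • ξ ∈ Γ

/-- The class `𝒫(ℝ^n)` of polynomially moderated positive measurable weights. -/
def moderate1 {V : Type} [NormedAddCommGroup V] [MeasurableSpace V] (ω : V → ℝ) : Prop :=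
  (∀ x, 0 < ω x) ∧ Measurable ω ∧
    ∃ C : ℝ, 0 < C ∧ ∃ N : ℕ, ∀ x y, ω (x + y) ≤ C * ω x * (1 + ‖y‖) ^ N

/-- The class `𝒫` for weights written as functions of two (blocks of) variables. -/
def moderate2 {V W : Type} [NormedAddCommGroup V] [NormedAddCommGroup W]
    [MeasurableSpace V] [MeasurableSpace W] (ω : V → W → ℝ) : Prop :=
  (∀ x ξ, 0 < ω x ξ) ∧ Measurable (Function.uncurry ω) ∧
    ∃ C : ℝ, 0 < C ∧ ∃ N : ℕ, ∀ x ξ y η,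
      ω (x + y) (ξ + η) ≤ C * ω x ξ * (1 + ‖y‖ + ‖η‖) ^ N

/-- The class `𝒫(ℝ^{4d})` for weights written as functions of four blocks of variables. -/
def moderate4 {d : ℕ} (ω : Ed d → Ed d → Ed d → Ed d → ℝ) : Prop :=
  (∀ x ξ ζ z, 0 < ω x ξ ζ z) ∧
    Measurable (fun p : Ed d × Ed d × Ed d × Ed d => ω p.1 p.2.1 p.2.2.1 p.2.2.2) ∧
    ∃ C : ℝ, 0 < C ∧ ∃ N : ℕ, ∀ x ξ ζ z x' ξ' ζ' z',
      ω (x + x') (ξ + ξ') (ζ + ζ') (z + z') ≤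
        C * ω x ξ ζ z * (1 + ‖x'‖ + ‖ξ'‖ + ‖ζ'‖ + ‖z'‖) ^ N

/-- Iterated directional (partial) derivative along a list of directions. -/
def pditer {V F : Type} [NormedAddCommGroup V] [NormedSpace ℝ V]
    [NormedAddCommGroup F] [NormedSpace ℝ F] :
    List V → (V → F) → V → F
  | [], f => f
  | v :: l, f => pditer l fun x => fderiv ℝ f x v

/-- The list of coordinate directions determined by a multi-index `α`. -/
def dirList {d : ℕ} (α : Fin d → ℕ) : List (Ed d) :=
  (List.finRange d).foldr
    (fun i acc => List.replicate (α i) (EuclideanSpace.single i (1 : ℝ)) ++ acc) []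

/-- The length `|α|` of a multi-index. -/
def mOrder {d : ℕ} (α : Fin d → ℕ) : ℕ := ∑ i, α i

/-- Directions on `ℝ^d × ℝ^d` corresponding to the mixed derivative `∂_x^α ∂_ξ^β`. -/
def dirListP {d : ℕ} (α β : Fin d → ℕ) : List (Ed2 d) :=
  (dirList α).map (fun v => (v, (0 : Ed d))) ++ (dirList β).map (fun v => ((0 : Ed d), v))

/-- Directions on `ℝ^{2d} × ℝ^{2d}` corresponding to `∂_x^{α₁} ∂_ξ^{α₂} ∂_ζ^{β₁} ∂_z^{β₂}`. -/
def dirListP2 {d : ℕ} (α₁ α₂ β₁ β₂ : Fin d → ℕ) : List (Ed2 d × Ed2 d) :=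
  (dirList α₁).map (fun v => ((v, (0 : Ed d)), ((0 : Ed d), (0 : Ed d)))) ++
  (dirList α₂).map (fun v => (((0 : Ed d), v), ((0 : Ed d), (0 : Ed d)))) ++
  (dirList β₁).map (fun v => (((0 : Ed d), (0 : Ed d)), (v, (0 : Ed d)))) ++
  (dirList β₂).map (fun v => (((0 : Ed d), (0 : Ed d)), ((0 : Ed d), v)))

/-- The symbol class `S^{(ω₀)}_{ρ,δ}(ℝ^{2d})`:  smooth functions `a` with
`|∂_x^α ∂_ξ^β a(x,ξ)| ≤ C_{αβ} ω₀(x,ξ) ⟨ξ⟩^{-ρ|β| + δ|α|}`. -/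
def SymbC {d : ℕ} {F : Type} [NormedAddCommGroup F] [NormedSpace ℝ F]
    (ρ δ : ℝ) (ω₀ : Ed d → Ed d → ℝ) (a : Ed d → Ed d → F) : Prop :=
  ContDiff ℝ ((⊤ : ℕ∞) : WithTop ℕ∞) (Function.uncurry a) ∧
    ∀ α β : Fin d → ℕ, ∃ C : ℝ, 0 < C ∧ ∀ x ξ : Ed d,
      ‖pditer (dirListP α β) (Function.uncurry a) (x, ξ)‖ ≤
        C * ω₀ x ξ * jap ξ ^ (δ * (mOrder α : ℝ) - ρ * (mOrder β : ℝ))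

/-- The symbol-type class on `ℝ^{2d} ⊕ ℝ^{2d}`, the second block of variables playing the
role of the frequency variable. -/
def SymbC2 {d : ℕ} {F : Type} [NormedAddCommGroup F] [NormedSpace ℝ F]
    (ρ δ : ℝ) (ω₀ : Ed2 d → Ed2 d → ℝ) (a : Ed2 d → Ed2 d → F) : Prop :=
  ContDiff ℝ ((⊤ : ℕ∞) : WithTop ℕ∞) (Function.uncurry a) ∧
    ∀ α₁ α₂ β₁ β₂ : Fin d → ℕ, ∃ C : ℝ, 0 < C ∧ ∀ X Y : Ed2 d,
      ‖pditer (dirListP2 α₁ α₂ β₁ β₂) (Function.uncurry a) (X, Y)‖ ≤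
        C * ω₀ X Y *
          jap2 Y ^ (δ * ((mOrder α₁ + mOrder α₂ : ℕ) : ℝ) -
            ρ * ((mOrder β₁ + mOrder β₂ : ℕ) : ℝ))

/-- The weight class `𝒫_{ρ,δ}(ℝ^{2d})`. -/
def PweightRD {d : ℕ} (ρ δ : ℝ) (ω : Ed d → Ed d → ℝ) : Prop :=
  moderate2 ω ∧ SymbC ρ δ ω ω

/-- The weight class `𝒫_{ρ,δ}(ℝ^{2d} ⊕ ℝ^{2d})`;  with `ρ = δ = 0` this is `𝒫₀(ℝ^{4d})`. -/
def PweightRD2 {d : ℕ} (ρ δ : ℝ) (ω : Ed2 d → Ed2 d → ℝ) : Prop :=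
  moderate2 ω ∧ SymbC2 ρ δ ω ω

/-- `c` is `(X,Γ,R)`-unitary:  `c = 1` on `X × (Γ ∩ {|ξ| ≥ R})`. -/
def IsUnitaryOn {d : ℕ} (c : Ed d → Ed d → ℂ) (X Γ : Set (Ed d)) (R : ℝ) : Prop :=
  ∀ x ∈ X, ∀ ξ ∈ Γ, R ≤ ‖ξ‖ → c x ξ = 1

/-- `(x₀,ξ₀)` is non-characteristic for `a` with respect to `ω₀`. -/
def NonChar {d : ℕ} (ρ δ : ℝ) (ω₀ : Ed d → Ed d → ℝ) (a : Ed d → Ed d → ℂ)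
    (p : Ed d × Ed d) : Prop :=
  ∃ (b c h : Ed d → Ed d → ℂ) (X Γ : Set (Ed d)) (R : ℝ),
    SymbC ρ δ (fun x ξ => (ω₀ x ξ)⁻¹) b ∧
    SymbC ρ δ (fun _ _ => (1 : ℝ)) c ∧
    SymbC ρ δ (fun _ ξ => jap ξ ^ (-(ρ - δ))) h ∧
    IsOpen X ∧ p.1 ∈ X ∧ IsOpenConeNZ Γ ∧ p.2 ∈ Γ ∧ 0 < R ∧
    IsUnitaryOn c X Γ R ∧
    ∀ x ξ, b x ξ * a x ξ = c x ξ + h x ξ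

/-- The set of characteristic points `Char_{(ω₀)}(a) ⊆ ℝ^d × (ℝ^d ∖ 0)`. -/
def CharSet {d : ℕ} (ρ δ : ℝ) (ω₀ : Ed d → Ed d → ℝ) (a : Ed d → Ed d → ℂ) :
    Set (Ed d × Ed d) :=
  {p | p.2 ≠ 0 ∧ ¬ NonChar ρ δ ω₀ a p}

/-- Local ellipticity of the symbol `a` with respect to `ω₀`. -/
def IsElliptic {d : ℕ} (ω₀ : Ed d → Ed d → ℝ) (a : Ed d → Ed d → ℂ) : Prop :=
  ∀ K : Set (Ed d), IsCompact K →
    ∃ c R : ℝ, 0 < c ∧ 0 < R ∧ ∀ x ∈ K, ∀ ξ : Ed d, R ≤ ‖ξ‖ → c * ω₀ x ξ ≤ ‖a x ξ‖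

/-- The oscillatory kernel `e^{i⟨x,ξ⟩}`. -/
def fourierKer {d : ℕ} (x ξ : Ed d) : ℂ := Complex.exp (Complex.I * (⟪x, ξ⟫ : ℂ))

/-- `F = Op(a) f` in the Kohn-Nirenberg quantization, characterized by duality:
`⟨Op(a)f, g⟩ = ⟨f, θ_g⟩` where `θ_g(y) = (2π)^{-d} ∫∫ a(x,ξ) g(x) e^{i⟨x-y,ξ⟩} dx dξ`. -/
def IsOpKN {d : ℕ} (a : Ed d → Ed d → ℂ) (f F : SchD d → ℂ) : Prop :=
  ∀ g θ : SchD d,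
    (∀ y : Ed d, θ y = (((2 * Real.pi) ^ (-(d : ℝ)) : ℝ) : ℂ) *
        ∫ ξ : Ed d, ∫ x : Ed d, a x ξ * g x * fourierKer (x - y) ξ) →
    F g = f θ

/-- `Op(a) f (x)` for Schwartz `f`, as an iterated oscillatory integral. -/
def opFun {d : ℕ} (a : Ed d → Ed d → ℂ) (f : SchD d) (x : Ed d) : ℂ :=
  (((2 * Real.pi) ^ (-(d : ℝ)) : ℝ) : ℂ) *
    ∫ ξ : Ed d, ∫ y : Ed d, a x ξ * f y * fourierKer (x - y) ξ

/-- `Op_t(a) f (x)` for Schwartz `f`. -/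
def opFunT {d : ℕ} (a : Ed d → Ed d → ℂ) (t : ℝ) (f : SchD d) (x : Ed d) : ℂ :=
  (((2 * Real.pi) ^ (-(d : ℝ)) : ℝ) : ℂ) *
    ∫ ξ : Ed d, ∫ y : Ed d, a ((1 - t) • x + t • y) ξ * f y * fourierKer (x - y) ξ

/-- A Schwartz function has temperate growth. -/
theorem SchwartzMap.hasTemperateGrowth' {V : Type} [NormedAddCommGroup V] [NormedSpace ℝ V]
    (f : SchwartzMap V ℂ) : Function.HasTemperateGrowth (⇑f) := by
  refine ⟨f.smooth', fun n => ⟨0, SchwartzMap.seminorm ℝ 0 n f, fun x => ?_⟩⟩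
  simpa using norm_iteratedFDeriv_le_seminorm ℝ f n x

/-- The canonical embedding of Schwartz functions into tempered distributions. -/
def iota {d : ℕ} (f : SchD d) : TDist d :=
  letI B : SchD d →L[ℝ] SchD d :=
    SchwartzMap.bilinLeftCLM (ContinuousLinearMap.mul ℝ ℂ) f.hasTemperateGrowth'
  letI I : SchD d →L[ℂ] ℂ := SchwartzMap.integralCLM ℂ (volume : Measure (Ed d))
  { toFun := fun g => I (B g)
    map_add' := fun g₁ g₂ => by show I (B (g₁ + g₂)) = I (B g₁) + I (B g₂); rw [map_add, map_add]
    map_smul' := fun c g => by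
      show I (B (c • g)) = c * I (B g)
      have h : B (c • g) = c • B g := by
        ext x
        show (c • g) x * f x = (c • B g) x
        rw [smul_apply, smul_apply]
        show c • g x * f x = c • (g x * f x)
        simp only [smul_eq_mul]; ring
      rw [h, _root_.map_smul, smul_eq_mul]
    cont := by
      exact (SchwartzMap.integralCLM ℂ (volume : Measure (Ed d))).continuous.comp
        (SchwartzMap.bilinLeftCLM (ContinuousLinearMap.mul ℝ ℂ)
          f.hasTemperateGrowth').continuous }

/-- `L^q`-type quantity for `ℝ≥0∞`-valued functions, used for mixed norms. -/
def eLpNormENN {α : Type} [MeasurableSpace α] (f : α → ℝ≥0∞) (q : ℝ≥0∞) (μ : Measure α) :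
    ℝ≥0∞ :=
  if q = ∞ then essSup f μ else (∫⁻ a, f a ^ q.toReal ∂μ) ^ (1 / q.toReal)

/-- Finiteness of the Fourier Lebesgue seminorm `|φu|_{ℱL^q_{(ω)}(Γ)}`. -/
def FLGammaFin {d : ℕ} (q : ℝ≥0∞) (ω : Ed d → Ed d → ℝ) (u : SchD d → ℂ) (φ : SchD d)
    (Γ : Set (Ed d)) : Prop :=
  eLpNorm (fun ξ => ‖ftCut u φ ξ‖ * ω 0 ξ) q (volume.restrict Γ) < ⊤

/-- `φ` is an admissible cut-off function at `x₀` inside `X`. -/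
def CutoffAt {d : ℕ} (φ : SchD d) (X : Set (Ed d)) (x₀ : Ed d) : Prop :=
  HasCompactSupport (⇑φ) ∧ tsupport (⇑φ) ⊆ X ∧ φ x₀ ≠ 0

/-- The wave-front set of `u` with respect to `ℱL^q_{(ω)}`, relative to the open set `X`. -/
def WF_FL {d : ℕ} (q : ℝ≥0∞) (ω : Ed d → Ed d → ℝ) (X : Set (Ed d)) (u : SchD d → ℂ) :
    Set (Ed d × Ed d) :=
  {p | p.1 ∈ X ∧ p.2 ≠ 0 ∧ ∀ φ : SchD d, CutoffAt φ X p.1 →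
    ∀ Γ : Set (Ed d), IsOpenConeNZ Γ → p.2 ∈ Γ → ¬ FLGammaFin q ω u φ Γ}

/-- The sup-type wave-front set with respect to an array of Fourier Lebesgue spaces. -/
def WF_FLsup {d : ℕ} {J : Type} (q : J → ℝ≥0∞) (ω : J → Ed d → Ed d → ℝ)
    (u : SchD d → ℂ) : Set (Ed d × Ed d) :=
  {p | p.2 ≠ 0 ∧ ∀ φ : SchD d, CutoffAt φ Set.univ p.1 →
    ∀ Γ : Set (Ed d), IsOpenConeNZ Γ → p.2 ∈ Γ → ¬ ∀ j : J, FLGammaFin (q j) (ω j) u φ Γ}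

/-- The inf-type wave-front set with respect to an array of Fourier Lebesgue spaces. -/
def WF_FLinf {d : ℕ} {J : Type} (q : J → ℝ≥0∞) (ω : J → Ed d → Ed d → ℝ)
    (u : SchD d → ℂ) : Set (Ed d × Ed d) :=
  {p | p.2 ≠ 0 ∧ ∀ φ : SchD d, CutoffAt φ Set.univ p.1 →
    ∀ Γ : Set (Ed d), IsOpenConeNZ Γ → p.2 ∈ Γ → ¬ ∃ j : J, FLGammaFin (q j) (ω j) u φ Γ}

/-- The classical Hörmander wave-front set. -/
def WFclassical {d : ℕ} (u : SchD d → ℂ) : Set (Ed d × Ed d) :=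
  {p | p.2 ≠ 0 ∧ ∀ φ : SchD d, CutoffAt φ Set.univ p.1 →
    ∀ Γ : Set (Ed d), IsOpenConeNZ Γ → p.2 ∈ Γ →
      ∃ N : ℕ, ¬ ∃ C : ℝ, ∀ ξ ∈ Γ, jap ξ ^ (N : ℝ) * ‖ftCut u φ ξ‖ ≤ C}

/-- `g` is a (continuous-type) representative on the cone `Γ` of the Fourier transform of the
distribution `F`. -/
def IsFTrepOn {d : ℕ} (F : SchD d → ℂ) (Γ : Set (Ed d)) (g : Ed d → ℂ) : Prop :=
  ∀ ψ ψ' : SchD d, tsupport (⇑ψ) ⊆ Γ →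
    (∀ ξ : Ed d, ψ' ξ = (cD d : ℂ) *
        ∫ x : Ed d, ψ x * Complex.exp (-(Complex.I * (⟪x, ξ⟫ : ℂ)))) →
    F ψ' = ∫ ξ : Ed d, g ξ * ψ ξ

/-- Finiteness of the Fourier Lebesgue seminorm `|F|_{ℱL^q_{(ω)}(Γ)}` of a tempered
distribution `F` (no cut-off), via representatives of `ℱF` on `Γ`. -/
def FLGammaFinD {d : ℕ} (q : ℝ≥0∞) (ω : Ed d → Ed d → ℝ) (F : SchD d → ℂ)
    (Γ : Set (Ed d)) : Prop :=
  ∃ g : Ed d → ℂ, IsFTrepOn F Γ g ∧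
    eLpNorm (fun ξ => ‖g ξ‖ * ω 0 ξ) q (volume.restrict Γ) < ⊤

/-- The distribution `f` is supported in `K`. -/
def SuppIn {d : ℕ} (f : SchD d → ℂ) (K : Set (Ed d)) : Prop :=
  ∀ ψ : SchD d, Disjoint (tsupport (⇑ψ)) K → f ψ = 0

/-- `f` defines a distribution on the open set `X`:  a Schwartz-seminorm bound holds for test
functions supported in any fixed compact subset of `X`. -/
def IsDistOn {d : ℕ} (f : SchD d → ℂ) (X : Set (Ed d)) : Prop :=
  ∀ K : Set (Ed d), IsCompact K → K ⊆ X →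
    ∃ C : ℝ, 0 < C ∧ ∃ N : ℕ, ∀ ψ : SchD d, tsupport (⇑ψ) ⊆ K →
      ‖f ψ‖ ≤ C * ∑ k ∈ Finset.range (N + 1), ∑ n ∈ Finset.range (N + 1),
        SchwartzMap.seminorm ℝ k n ψ

/-- `f` is a tempered distribution of order at most `N`. -/
def HasOrderLE {d : ℕ} (f : SchD d → ℂ) (N : ℕ) : Prop :=
  ∃ C : ℝ, 0 < C ∧ ∀ ψ : SchD d,
    ‖f ψ‖ ≤ C * ∑ k ∈ Finset.range (N + 1), ∑ n ∈ Finset.range (N + 1),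
      SchwartzMap.seminorm ℝ k n ψ

/-- The mixed-norm quantity `(∫_Γ (∫ |V_φ u(x,ξ) ω(x,ξ)|^p dx)^{q/p} dξ)^{1/q}` defining the
modulation space seminorm over a cone `Γ`. -/
def MGammaNorm {d : ℕ} (p q : ℝ≥0∞) (ω : Ed d → Ed d → ℝ) (u : SchD d → ℂ) (φw : SchD d)
    (Γ : Set (Ed d)) : ℝ≥0∞ :=
  eLpNormENN (fun ξ => eLpNorm (fun x => ‖stft u φw x ξ‖ * ω x ξ) p volume) q
    (volume.restrict Γ)

/-- The mixed-norm quantity defining the `W^{p,q}` (Wiener amalgam type) seminorm over a cone. -/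
def WGammaNorm {d : ℕ} (p q : ℝ≥0∞) (ω : Ed d → Ed d → ℝ) (u : SchD d → ℂ) (φw : SchD d)
    (Γ : Set (Ed d)) : ℝ≥0∞ :=
  eLpNormENN (fun x => eLpNorm (fun ξ => ‖stft u φw x ξ‖ * ω x ξ) q (volume.restrict Γ))
    p volume

/-- The wave-front set of `u` with respect to `M^{p,q}_{(ω)}` (window `φw`). -/
def WF_M {d : ℕ} (p q : ℝ≥0∞) (ω : Ed d → Ed d → ℝ) (X : Set (Ed d)) (u : SchD d → ℂ)
    (φw : SchD d) : Set (Ed d × Ed d) :=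
  {pt | pt.1 ∈ X ∧ pt.2 ≠ 0 ∧ ∀ φ : SchD d, CutoffAt φ X pt.1 →
    ∀ Γ : Set (Ed d), IsOpenConeNZ Γ → pt.2 ∈ Γ →
      ¬ MGammaNorm p q ω (mulDist u (⇑φ)) φw Γ < ⊤}

/-- The wave-front set of `u` with respect to `W^{p,q}_{(ω)}` (window `φw`). -/
def WF_W {d : ℕ} (p q : ℝ≥0∞) (ω : Ed d → Ed d → ℝ) (X : Set (Ed d)) (u : SchD d → ℂ)
    (φw : SchD d) : Set (Ed d × Ed d) :=
  {pt | pt.1 ∈ X ∧ pt.2 ≠ 0 ∧ ∀ φ : SchD d, CutoffAt φ X pt.1 →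
    ∀ Γ : Set (Ed d), IsOpenConeNZ Γ → pt.2 ∈ Γ →
      ¬ WGammaNorm p q ω (mulDist u (⇑φ)) φw Γ < ⊤}

/-- Distributional directional derivative: `(∂_v u)(ψ) = -u(∂_v ψ)`. -/
def distDeriv {V : Type} [NormedAddCommGroup V] [NormedSpace ℝ V]
    (v : V) (u : SchwartzMap V ℂ → ℂ) : SchwartzMap V ℂ → ℂ :=
  fun ψ => -(u (LineDeriv.lineDerivOpCLM ℝ (SchwartzMap V ℂ) v ψ))

/-- Iterated distributional derivative along a list of directions. -/
def distDerivList {V : Type} [NormedAddCommGroup V] [NormedSpace ℝ V] :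
    List V → (SchwartzMap V ℂ → ℂ) → SchwartzMap V ℂ → ℂ
  | [], u => u
  | v :: l, u => distDerivList l (distDeriv v u)

/-- The distributional derivative `∂_ξ^α u` of a distribution on `ℝ^{2d}`, in the second
(frequency) block of variables. -/
def distDerivXi {d : ℕ} (α : Fin d → ℕ) (u : SchD2 d → ℂ) : SchD2 d → ℂ :=
  distDerivList ((dirList α).map fun v => (((0 : Ed d), v) : Ed2 d)) u

/-- Membership `u ∈ M^{∞,1}_{(ν)}(ℝ^{2d})` (with respect to some nonzero Schwartz window). -/
def MemM1inf {d : ℕ} (u : SchD2 d → ℂ) (ν : Ed2 d → Ed2 d → ℝ) : Prop :=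
  ∃ φw : SchD2 d, φw ≠ 0 ∧
    (∫⁻ Y : Ed2 d, ⨆ X : Ed2 d, ENNReal.ofReal (‖stft2 u φw X Y‖ * ν X Y)) < ⊤

/-- The weight `ω_{s,ρ}(x,ξ,ζ,z) = ω(x,ξ,ζ,z)⟨x⟩^{-s₄}⟨ζ⟩^{-s₃}⟨ξ⟩^{-ρs₂}⟨z⟩^{-s₁}`,
where `X = (x,ξ)` and `Y = (ζ,z)`. -/
def omegaS {d : ℕ} (ω : Ed2 d → Ed2 d → ℝ) (s₁ s₂ s₃ s₄ ρ : ℝ) : Ed2 d → Ed2 d → ℝ :=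
  fun X Y =>
    ω X Y * jap X.1 ^ (-s₄) * jap Y.1 ^ (-s₃) * jap X.2 ^ (-(ρ * s₂)) * jap Y.2 ^ (-s₁)

/-- The symbol class `℧^{s,ρ}_{(ω)}(ℝ^{2d})`:  `∂_ξ^α a ∈ M^{∞,1}_{(1/ω_{s(α),ρ})}` for all
`|α| ≤ 2 s₂`, where `s(α) = (s₁,|α|,s₃,s₄)`. -/
def MhoMem {d : ℕ} (ω : Ed2 d → Ed2 d → ℝ) (s₁ s₂ s₃ s₄ ρ : ℝ) (a : SchD2 d → ℂ) : Prop :=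
  ∀ α : Fin d → ℕ, (mOrder α : ℝ) ≤ 2 * s₂ →
    MemM1inf (distDerivXi α a) fun X Y => (omegaS ω s₁ (mOrder α : ℝ) s₃ s₄ ρ X Y)⁻¹

/-- The modulation space norm-type quantity for `M^{p,q}_{(ω)}(ℝ^d)` with window `φw`. -/
def Mnorm {d : ℕ} (p q : ℝ≥0∞) (ω : Ed d → Ed d → ℝ) (φw : SchD d) (u : SchD d → ℂ) :
    ℝ≥0∞ :=
  eLpNormENN (fun ξ => eLpNorm (fun x => ‖stft u φw x ξ‖ * ω x ξ) p volume) q volume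

/-- The `M^∞_{(ϑ)}(ℝ^d)` norm-type quantity with window `φw`. -/
def MnormInf {d : ℕ} (ϑ : Ed d → Ed d → ℝ) (φw : SchD d) (u : SchD d → ℂ) : ℝ≥0∞ :=
  ⨆ x : Ed d, ⨆ ξ : Ed d, ENNReal.ofReal (‖stft u φw x ξ‖ * ϑ x ξ)

/-- The (paper-normalized) Fourier transform of a Schwartz function, pointwise. -/
def ftS {d : ℕ} (f : SchD d) (ξ : Ed d) : ℂ :=
  (cD d : ℂ) * ∫ x : Ed d, f x * Complex.exp (-(Complex.I * (⟪x, ξ⟫ : ℂ)))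

/-- The pairing `⟨Op(a) f, g⟩ = ⟨a, (x,ξ) ↦ (2π)^{-d/2} g(x) ℱf(ξ) e^{i⟨x,ξ⟩}⟩` defining a
pseudo-differential operator with distributional symbol `a` on Schwartz functions `f`, `g`. -/
def opDPair {d : ℕ} (a : SchD2 d → ℂ) (f g : SchD d) : ℂ :=
  distPairG a fun X => (cD d : ℂ) * g X.1 * ftS f X.2 * fourierKer X.1 X.2

/-- Multiplication of a Schwartz function by a function, through a Schwartz representative. -/
def mulSchwartzFn {V : Type} [NormedAddCommGroup V] [NormedSpace ℝ V]
    (g : V → ℂ) (f : SchwartzMap V ℂ) : SchwartzMap V ℂ :=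
  schwartzOf fun x => g x * f x

/-- `F = Op(a) f`, where `Op(a)` is extended from Schwartz functions by continuity along
norm-bounded weak-* convergent sequences in `M^∞_{(ϑ)}`. -/
def IsOpModExt {d : ℕ} (a : SchD2 d → ℂ) (ϑ : Ed d → Ed d → ℝ) (φw : SchD d)
    (f F : SchD d → ℂ) : Prop :=
  ∀ (fs : ℕ → SchD d) (Bd : ℝ≥0∞), Bd ≠ ⊤ →
    (∀ n, MnormInf ϑ φw (⇑(iota (fs n))) ≤ Bd) →
    (∀ ψ : SchD d, Tendsto (fun n => iota (fs n) ψ) atTop (𝓝 (f ψ))) →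
    ∀ g : SchD d, Tendsto (fun n => opDPair a (fs n) g) atTop (𝓝 (F g))



/-! ### Auxiliary machinery for statement 9 -/

section Statement9Aux

/-- All ways to split a list of directions between two factors of a product (Leibniz). -/
def splits9 {V : Type} : List V → List (List V × List V)
  | [] => [([], [])]
  | v :: l =>
    ((splits9 l).map fun p => (v :: p.1, p.2)) ++ ((splits9 l).map fun p => (p.1, v :: p.2))

lemma contDiff_pd9 {V : Type} [NormedAddCommGroup V] [NormedSpace ℝ V] {f : V → ℂ}
    (hf : ContDiff ℝ ((⊤ : ℕ∞) : WithTop ℕ∞) f) (v : V) : ContDiff ℝ ((⊤ : ℕ∞) : WithTop ℕ∞) (fun x => fderiv ℝ f x v) :=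
  (ContinuousLinearMap.apply ℝ ℂ v).contDiff.comp (hf.fderiv_right (le_refl _))

lemma pditer_add9 {V : Type} [NormedAddCommGroup V] [NormedSpace ℝ V] (l : List V) :
    ∀ (f g : V → ℂ), ContDiff ℝ ((⊤ : ℕ∞) : WithTop ℕ∞) f → ContDiff ℝ ((⊤ : ℕ∞) : WithTop ℕ∞) g →
    ∀ z, pditer l (fun x => f x + g x) z = pditer l f z + pditer l g z := by
  induction l with
  | nil => intro f g _ _ z; rfl
  | cons v l ih =>
    intro f g hf hg z
    show pditer l (fun x => fderiv ℝ (fun y => f y + g y) x v) z = _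
    have hfd : (fun x => fderiv ℝ (fun y => f y + g y) x v)
        = fun x => fderiv ℝ f x v + fderiv ℝ g x v := by
      funext x
      rw [fderiv_fun_add ((hf.differentiable (by simp)).differentiableAt)
        ((hg.differentiable (by simp)).differentiableAt)]
      rfl
    rw [hfd, ih _ _ (contDiff_pd9 hf v) (contDiff_pd9 hg v)]
    rfl

lemma pditer_mul9 {V : Type} [NormedAddCommGroup V] [NormedSpace ℝ V] (l : List V) :
    ∀ (f g : V → ℂ), ContDiff ℝ ((⊤ : ℕ∞) : WithTop ℕ∞) f → ContDiff ℝ ((⊤ : ℕ∞) : WithTop ℕ∞) g →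
    ∀ z, pditer l (fun x => f x * g x) z
      = ((splits9 l).map fun p => pditer p.1 f z * pditer p.2 g z).sum := by
  induction l with
  | nil => intro f g _ _ z; simp [splits9, pditer]
  | cons v l ih =>
    intro f g hf hg z
    show pditer l (fun x => fderiv ℝ (fun y => f y * g y) x v) z = _
    have hfd : (fun x => fderiv ℝ (fun y => f y * g y) x v)
        = fun x => (fderiv ℝ f x v * g x) + (f x * fderiv ℝ g x v) := by
      funext x
      rw [fderiv_fun_mul ((hf.differentiable (by simp)).differentiableAt)
        ((hg.differentiable (by simp)).differentiableAt)]
      simp only [ContinuousLinearMap.add_apply, ContinuousLinearMap.smul_apply, smul_eq_mul]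
      ring
    rw [hfd, pditer_add9 l _ _ (((contDiff_pd9 hf v)).mul hg) (hf.mul (contDiff_pd9 hg v)),
      ih _ g (contDiff_pd9 hf v) hg, ih f _ hf (contDiff_pd9 hg v)]
    show _ = ((( ((splits9 l).map fun p => (v :: p.1, p.2)) ++
        ((splits9 l).map fun p => (p.1, v :: p.2))).map
        (fun p => pditer p.1 f z * pditer p.2 g z)).sum : ℂ)
    rw [List.map_append, List.sum_append, List.map_map, List.map_map]
    rfl

lemma splits9_cons_mem {V : Type} {v : V} {l : List V} {p : List V × List V}
    (hp : p ∈ splits9 (v :: l)) :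
    (∃ q ∈ splits9 l, p = (v :: q.1, q.2)) ∨ (∃ q ∈ splits9 l, p = (q.1, v :: q.2)) := by
  rcases List.mem_append.mp hp with h | h
  · left; rcases List.mem_map.mp h with ⟨q, hq, hq2⟩; exact ⟨q, hq, hq2.symm⟩
  · right; rcases List.mem_map.mp h with ⟨q, hq, hq2⟩; exact ⟨q, hq, hq2.symm⟩

lemma splits9_append_mem {V : Type} : ∀ (l₁ l₂ : List V) (p : List V × List V),
    p ∈ splits9 (l₁ ++ l₂) →
    ∃ p₁ ∈ splits9 l₁, ∃ p₂ ∈ splits9 l₂, p = (p₁.1 ++ p₂.1, p₁.2 ++ p₂.2) := by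
  intro l₁
  induction l₁ with
  | nil =>
    intro l₂ p hp
    exact ⟨([], []), by simp [splits9], p, by simpa using hp, by simp⟩
  | cons v l ih =>
    intro l₂ p hp
    rcases splits9_cons_mem hp with ⟨q, hq, rfl⟩ | ⟨q, hq, rfl⟩
    · rcases ih l₂ q hq with ⟨p₁, h₁, p₂, h₂, hq'⟩
      refine ⟨(v :: p₁.1, p₁.2), ?_, p₂, h₂, ?_⟩
      · exact List.mem_append.mpr (Or.inl (List.mem_map.mpr ⟨p₁, h₁, rfl⟩))
      · rw [hq']; simp
    · rcases ih l₂ q hq with ⟨p₁, h₁, p₂, h₂, hq'⟩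
      refine ⟨(p₁.1, v :: p₁.2), ?_, p₂, h₂, ?_⟩
      · exact List.mem_append.mpr (Or.inr (List.mem_map.mpr ⟨p₁, h₁, rfl⟩))
      · rw [hq']; simp

lemma splits9_map_mem {V W : Type} (f : V → W) :
    ∀ (l : List V) (p : List W × List W), p ∈ splits9 (l.map f) →
    ∃ q ∈ splits9 l, p = (q.1.map f, q.2.map f) := by
  intro l
  induction l with
  | nil => intro p hp; exact ⟨([], []), by simp [splits9], by simpa [splits9] using hp⟩
  | cons v l ih =>
    intro p hp
    rcases splits9_cons_mem hp with ⟨q, hq, rfl⟩ | ⟨q, hq, rfl⟩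
    · rcases ih q hq with ⟨q', hq', hq2⟩
      exact ⟨(v :: q'.1, q'.2), List.mem_append.mpr (Or.inl (List.mem_map.mpr ⟨q', hq', rfl⟩)),
        by rw [hq2]; simp⟩
    · rcases ih q hq with ⟨q', hq', hq2⟩
      exact ⟨(q'.1, v :: q'.2), List.mem_append.mpr (Or.inr (List.mem_map.mpr ⟨q', hq', rfl⟩)),
        by rw [hq2]; simp⟩

lemma splits9_replicate {V : Type} (v : V) : ∀ (n : ℕ) (p : List V × List V),
    p ∈ splits9 (List.replicate n v) →
    ∃ k, k ≤ n ∧ p = (List.replicate k v, List.replicate (n - k) v) := by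
  intro n
  induction n with
  | zero =>
    intro p hp
    refine ⟨0, le_refl _, ?_⟩
    have : p = (([] : List V), ([] : List V)) := List.mem_singleton.mp hp
    rw [this]
    rfl
  | succ n ih =>
    intro p hp
    rw [List.replicate_succ] at hp
    rcases splits9_cons_mem hp with ⟨q, hq, rfl⟩ | ⟨q, hq, rfl⟩
    · rcases ih q hq with ⟨k, hk, hq2⟩
      refine ⟨k + 1, Nat.succ_le_succ hk, ?_⟩
      rw [hq2]
      have : n + 1 - (k + 1) = n - k := Nat.succ_sub_succ_eq_sub n k
      rw [this, List.replicate_succ]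
    · rcases ih q hq with ⟨k, hk, hq2⟩
      refine ⟨k, hk.trans (Nat.le_succ n), ?_⟩
      rw [hq2]
      have : n + 1 - k = (n - k) + 1 := by
        rw [Nat.succ_sub hk]
      rw [this, List.replicate_succ]

/-- Generic form of `dirList` over an arbitrary index list. -/
def gL9 {ι V : Type} (e : ι → V) (L : List ι) (α : ι → ℕ) : List V :=
  L.foldr (fun i acc => List.replicate (α i) (e i) ++ acc) []

lemma gL9_congr {ι V : Type} (e : ι → V) (L : List ι) {α α' : ι → ℕ}
    (h : ∀ i ∈ L, α i = α' i) : gL9 e L α = gL9 e L α' := by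
  induction L with
  | nil => rfl
  | cons i L ih =>
    show List.replicate (α i) (e i) ++ gL9 e L α = List.replicate (α' i) (e i) ++ gL9 e L α'
    rw [h i (List.mem_cons_self), ih fun j hj => h j (List.mem_cons_of_mem _ hj)]

lemma splits9_gL {ι V : Type} [DecidableEq ι] (e : ι → V) :
    ∀ (L : List ι), L.Nodup → ∀ (α : ι → ℕ) (p : List V × List V),
    p ∈ splits9 (gL9 e L α) →
    ∃ α₁ α₂ : ι → ℕ, (∀ i, α₁ i + α₂ i = if i ∈ L then α i else 0) ∧
      p.1 = gL9 e L α₁ ∧ p.2 = gL9 e L α₂ := by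
  intro L
  induction L with
  | nil =>
    intro _ α p hp
    refine ⟨0, 0, by simp, ?_, ?_⟩ <;> simp [gL9, splits9] at hp ⊢ <;> simp [hp]
  | cons i L ih =>
    intro hnd α p hp
    have hiL : i ∉ L := (List.nodup_cons.mp hnd).1
    have hndL : L.Nodup := (List.nodup_cons.mp hnd).2
    have : gL9 e (i :: L) α = List.replicate (α i) (e i) ++ gL9 e L α := rfl
    rw [this] at hp
    rcases splits9_append_mem _ _ _ hp with ⟨p₁, h₁, p₂, h₂, hpq⟩
    rcases splits9_replicate (e i) (α i) p₁ h₁ with ⟨k, hk, hp1⟩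
    rcases ih hndL α p₂ h₂ with ⟨α₁', α₂', hsum, hp21, hp22⟩
    refine ⟨Function.update α₁' i k, Function.update α₂' i (α i - k), ?_, ?_, ?_⟩
    · intro j
      by_cases hj : j = i
      · subst hj
        rw [Function.update_self, Function.update_self, if_pos (List.mem_cons_self)]
        exact Nat.add_sub_cancel' hk
      · rw [Function.update_of_ne hj, Function.update_of_ne hj]
        by_cases hjL : j ∈ L
        · rw [if_pos (List.mem_cons.mpr (Or.inr hjL)), hsum j, if_pos hjL]
        · rw [if_neg (fun h => (List.mem_cons.mp h).elim hj hjL), hsum j, if_neg hjL]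
    · rw [hpq]
      show p₁.1 ++ p₂.1 = List.replicate (Function.update α₁' i k i) (e i) ++ gL9 e L _
      rw [Function.update_self, hp1, hp21,
        gL9_congr e L (α := α₁') (α' := Function.update α₁' i k)
          fun j hj => (Function.update_of_ne (by rintro rfl; exact hiL hj) _ _).symm]
    · rw [hpq]
      show p₁.2 ++ p₂.2 = List.replicate (Function.update α₂' i (α i - k) i) (e i) ++ gL9 e L _
      rw [Function.update_self, hp1, hp22,
        gL9_congr e L (α := α₂') (α' := Function.update α₂' i (α i - k))
          fun j hj => (Function.update_of_ne (by rintro rfl; exact hiL hj) _ _).symm]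

lemma splits9_dirList {d : ℕ} (α : Fin d → ℕ) (p : List (Ed d) × List (Ed d))
    (hp : p ∈ splits9 (dirList α)) :
    ∃ α₁ α₂ : Fin d → ℕ, (∀ i, α₁ i + α₂ i = α i) ∧ p.1 = dirList α₁ ∧ p.2 = dirList α₂ := by
  have hd : dirList α = gL9 (fun i => EuclideanSpace.single i (1 : ℝ)) (List.finRange d) α := rfl
  rw [hd] at hp
  rcases splits9_gL _ (List.finRange d) (List.nodup_finRange d) α p hp with ⟨α₁, α₂, hsum, h1, h2⟩
  exact ⟨α₁, α₂, fun i => by simpa [List.mem_finRange] using hsum i, h1, h2⟩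

lemma splits9_dirListP {d : ℕ} (α β : Fin d → ℕ) (p : List (Ed2 d) × List (Ed2 d))
    (hp : p ∈ splits9 (dirListP α β)) :
    ∃ α₁ β₁ α₂ β₂ : Fin d → ℕ, (∀ i, α₁ i + α₂ i = α i) ∧ (∀ i, β₁ i + β₂ i = β i) ∧
      p.1 = dirListP α₁ β₁ ∧ p.2 = dirListP α₂ β₂ := by
  have hd : dirListP α β = (dirList α).map (fun v => ((v, (0 : Ed d)) : Ed2 d))
      ++ (dirList β).map (fun v => (((0 : Ed d), v) : Ed2 d)) := rfl
  rw [hd] at hp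
  rcases splits9_append_mem _ _ _ hp with ⟨p₁, h₁, p₂, h₂, hpq⟩
  rcases splits9_map_mem _ _ _ h₁ with ⟨q, hq, hq2⟩
  rcases splits9_map_mem _ _ _ h₂ with ⟨q', hq', hq2'⟩
  rcases splits9_dirList α q hq with ⟨α₁, α₂, hα, ha1, ha2⟩
  rcases splits9_dirList β q' hq' with ⟨β₁, β₂, hβ, hb1, hb2⟩
  refine ⟨α₁, β₁, α₂, β₂, hα, hβ, ?_, ?_⟩
  · rw [hpq]
    show p₁.1 ++ p₂.1 = dirListP α₁ β₁
    rw [hq2, hq2']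
    show q.1.map _ ++ q'.1.map _ = dirListP α₁ β₁
    rw [ha1, hb1]; rfl
  · rw [hpq]
    show p₁.2 ++ p₂.2 = dirListP α₂ β₂
    rw [hq2, hq2']
    show q.2.map _ ++ q'.2.map _ = dirListP α₂ β₂
    rw [ha2, hb2]; rfl

lemma mOrder_split9 {d : ℕ} {β₁ β₂ β : Fin d → ℕ} (h : ∀ i, β₁ i + β₂ i = β i) :
    mOrder β₁ + mOrder β₂ = mOrder β := by
  unfold mOrder
  rw [← Finset.sum_add_distrib]
  exact Finset.sum_congr rfl fun i _ => h i

lemma jap_pos9 {d : ℕ} (ξ : Ed d) : 0 < jap ξ :=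
  Real.sqrt_pos.mpr (by positivity)

lemma list_bound9 {d : ℕ} {γ : Type} (w : Ed d → Ed d → ℝ) (hw : ∀ x ξ, 0 ≤ w x ξ) :
    ∀ (l : List γ) (F : γ → Ed d → Ed d → ℝ),
    (∀ p ∈ l, ∃ C : ℝ, 0 < C ∧ ∀ x ξ, F p x ξ ≤ C * w x ξ) →
    ∃ C : ℝ, 0 < C ∧ ∀ x ξ, (l.map fun p => F p x ξ).sum ≤ C * w x ξ := by
  intro l
  induction l with
  | nil =>
    intro F _
    exact ⟨1, one_pos, fun x ξ => by simpa using hw x ξ⟩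
  | cons a l ih =>
    intro F h
    obtain ⟨Ca, hCa, hba⟩ := h a (List.mem_cons_self)
    obtain ⟨Cl, hCl, hbl⟩ := ih F fun p hp => h p (List.mem_cons_of_mem _ hp)
    refine ⟨Ca + Cl, by positivity, fun x ξ => ?_⟩
    simp only [List.map_cons, List.sum_cons]
    have := hba x ξ
    have := hbl x ξ
    nlinarith [hw x ξ]

lemma norm_list_sum_le9 {γ : Type} (l : List γ) (h : γ → ℂ) :
    ‖(l.map h).sum‖ ≤ (l.map fun p => ‖h p‖).sum := by
  induction l with
  | nil => simp
  | cons a l ih =>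
    simp only [List.map_cons, List.sum_cons]
    exact (norm_add_le _ _).trans (by linarith)

/-- Product rule for the symbol classes `S^{s}_{1,0} · S^{t}_{1,0} ⊆ S^{s+t}_{1,0}`. -/
lemma symb_mul9 {d : ℕ} (s t : ℝ) (f g : Ed d → Ed d → ℂ)
    (hf : SymbC 1 0 (fun _ ξ => jap ξ ^ s) f) (hg : SymbC 1 0 (fun _ ξ => jap ξ ^ t) g) :
    SymbC 1 0 (fun _ ξ => jap ξ ^ (s + t)) (fun x ξ => f x ξ * g x ξ) := by
  obtain ⟨hfs, hfb⟩ := hf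
  obtain ⟨hgs, hgb⟩ := hg
  have hF : Function.uncurry (fun x ξ => f x ξ * g x ξ)
      = fun p : Ed2 d => Function.uncurry f p * Function.uncurry g p := rfl
  refine ⟨by rw [hF]; exact hfs.mul hgs, ?_⟩
  intro α β
  set E : ℝ := (0 : ℝ) * (mOrder α : ℝ) - (1 : ℝ) * (mOrder β : ℝ) with hE
  have key : ∀ p ∈ splits9 (dirListP α β), ∃ C : ℝ, 0 < C ∧ ∀ x ξ : Ed d,
      ‖pditer p.1 (Function.uncurry f) (x, ξ)‖ * ‖pditer p.2 (Function.uncurry g) (x, ξ)‖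
        ≤ C * (jap ξ ^ (s + t) * jap ξ ^ E) := by
    intro p hp
    rcases splits9_dirListP α β p hp with ⟨α₁, β₁, α₂, β₂, hα, hβ, h1, h2⟩
    obtain ⟨C₁, hC₁, hb₁⟩ := hfb α₁ β₁
    obtain ⟨C₂, hC₂, hb₂⟩ := hgb α₂ β₂
    refine ⟨C₁ * C₂, by positivity, fun x ξ => ?_⟩
    have e₁ := hb₁ x ξ
    have e₂ := hb₂ x ξ
    rw [← h1] at e₁
    rw [← h2] at e₂
    have hjp := jap_pos9 ξ
    have hprod : ‖pditer p.1 (Function.uncurry f) (x, ξ)‖ *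
        ‖pditer p.2 (Function.uncurry g) (x, ξ)‖
        ≤ (C₁ * jap ξ ^ s * jap ξ ^ ((0:ℝ) * (mOrder α₁ : ℝ) - 1 * (mOrder β₁ : ℝ))) *
          (C₂ * jap ξ ^ t * jap ξ ^ ((0:ℝ) * (mOrder α₂ : ℝ) - 1 * (mOrder β₂ : ℝ))) := by
      apply mul_le_mul e₁ e₂ (norm_nonneg _) (le_trans (norm_nonneg _) e₁)
    refine hprod.trans (le_of_eq ?_)
    have hβR : (mOrder β₁ : ℝ) + (mOrder β₂ : ℝ) = (mOrder β : ℝ) := by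
      exact_mod_cast congrArg (fun n : ℕ => (n : ℝ)) (mOrder_split9 hβ)
    have hexp : jap ξ ^ E = jap ξ ^ ((0:ℝ) * (mOrder α₁ : ℝ) - 1 * (mOrder β₁ : ℝ)) *
        jap ξ ^ ((0:ℝ) * (mOrder α₂ : ℝ) - 1 * (mOrder β₂ : ℝ)) := by
      rw [← Real.rpow_add hjp]
      congr 1
      rw [hE]
      linarith
    have hst : jap ξ ^ (s + t) = jap ξ ^ s * jap ξ ^ t := Real.rpow_add hjp s t
    rw [hst, hexp]
    ring
  obtain ⟨C, hC, hbd⟩ := list_bound9 (fun _ ξ => jap ξ ^ (s + t) * jap ξ ^ E)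
    (fun x ξ => (mul_pos (Real.rpow_pos_of_pos (jap_pos9 ξ) _)
      (Real.rpow_pos_of_pos (jap_pos9 ξ) _)).le) (splits9 (dirListP α β))
    (fun p x ξ => ‖pditer p.1 (Function.uncurry f) (x, ξ)‖ *
      ‖pditer p.2 (Function.uncurry g) (x, ξ)‖) key
  refine ⟨C, hC, fun x ξ => ?_⟩
  rw [hF]
  have hrw := pditer_mul9 (dirListP α β) (Function.uncurry f) (Function.uncurry g) hfs hgs (x, ξ)
  rw [hrw]
  calc ‖((splits9 (dirListP α β)).map fun p =>
        pditer p.1 (Function.uncurry f) (x, ξ) * pditer p.2 (Function.uncurry g) (x, ξ)).sum‖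
      ≤ ((splits9 (dirListP α β)).map fun p =>
        ‖pditer p.1 (Function.uncurry f) (x, ξ) * pditer p.2 (Function.uncurry g) (x, ξ)‖).sum :=
        norm_list_sum_le9 _ _
    _ = ((splits9 (dirListP α β)).map fun p =>
        ‖pditer p.1 (Function.uncurry f) (x, ξ)‖ *
          ‖pditer p.2 (Function.uncurry g) (x, ξ)‖).sum := by
        congr 1
        exact List.map_congr_left fun p _ => norm_mul _ _
    _ ≤ C * (jap ξ ^ (s + t) * jap ξ ^ E) := hbd x ξ
    _ = C * jap ξ ^ (s + t) * jap ξ ^ E := by ring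

lemma symbC_congr_w9 {d : ℕ} (ρ δ : ℝ) (ω ω' : Ed d → Ed d → ℝ) (f : Ed d → Ed d → ℂ)
    (h : SymbC ρ δ ω f) (hw : ∀ x ξ, ω x ξ = ω' x ξ) : SymbC ρ δ ω' f := by
  refine ⟨h.1, fun α β => ?_⟩
  obtain ⟨C, hC, hb⟩ := h.2 α β
  exact ⟨C, hC, fun x ξ => (hw x ξ) ▸ hb x ξ⟩

end Statement9Aux

/-- a polyhomogeneous symbol whose principal part is invertible near
`(x₀, ξ₀)` is non-characteristic there (with respect to `ω₀ = ⟨ξ⟩^r`). -/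
theorem statement9 {d : ℕ} (hd : 0 < d) (r : ℝ)
    (a ar : Ed d → Ed d → ℂ)
    (ha : SymbC 1 0 (fun _ ξ => jap ξ ^ r) a)
    (har : SymbC 1 0 (fun _ ξ => jap ξ ^ r) ar)
    (hdiff : SymbC 1 0 (fun _ ξ => jap ξ ^ (r - 1)) (fun x ξ => a x ξ - ar x ξ))
    (x₀ ξ₀ : Ed d) (hξ₀ : ξ₀ ≠ 0)
    (X : Set (Ed d)) (hX : IsOpen X) (hx₀ : x₀ ∈ X)
    (Γ : Set (Ed d)) (hΓ : IsOpenConeNZ Γ) (hξΓ : ξ₀ ∈ Γ)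
    (R : ℝ) (hR : 0 < R)
    (b : Ed d → Ed d → ℂ) (hb : SymbC 1 0 (fun _ ξ => jap ξ ^ (-r)) b)
    (hinv : ∀ x ∈ X, ∀ ξ ∈ Γ, R < ‖ξ‖ → ar x ξ * b x ξ = 1) :
    (x₀, ξ₀) ∉ CharSet 1 0 (fun _ ξ => jap ξ ^ r) a := by
  have hjp : ∀ ξ : Ed d, 0 < jap ξ := jap_pos9
  intro hmem
  apply hmem.2
  refine ⟨b, fun x ξ => b x ξ * ar x ξ, fun x ξ => b x ξ * (a x ξ - ar x ξ),
    X, Γ, R + 1, ?_, ?_, ?_, hX, hx₀, hΓ, hξΓ, by linarith, ?_, fun x ξ => by ring⟩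
  · exact symbC_congr_w9 1 0 _ _ b hb fun x ξ => (Real.rpow_neg (hjp ξ).le r).trans rfl
  · refine symbC_congr_w9 1 0 _ _ _ (symb_mul9 (-r) r b ar hb har) fun x ξ => ?_
    rw [show (-r) + r = (0 : ℝ) by ring, Real.rpow_zero]
  · refine symbC_congr_w9 1 0 _ _ _ (symb_mul9 (-r) (r - 1) b _ hb hdiff) fun x ξ => ?_
    congr 1
    ring
  · intro x hx ξ hξ hRξ
    show b x ξ * ar x ξ = 1
    rw [mul_comm]
    exact hinv x hx ξ hξ (by linarith)


end
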